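/- arXiv:2104.03371 — 4 statements merged into one kernel-verified Lean document; each statement's English description precedes it below -/
import Mathlib

section
/- Let L be a left Leibniz algebra, a ∈ L, and x, y ∈ ⟨a⟩ (the subalgebra generated by a). Then for every element z ∈ L, [[x,y],z] = 0. -/
/-- If `A = ⟨a⟩` is the cyclic subalgebra generated by `a` (the smallest subspace
containing `a` and closed under the bracket), then `[[x,y],z] = 0` for all
`x, y ∈ A` and all `z ∈ L`. -/
theorem bracket_of_cyclic_in_left_center
    {F : Type*} [Field F] {L : Type*} [AddCommGroup L] [Module F L]
    (br : L →ₗ[F] L →ₗ[F] L)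
    (hleib : ∀ a b c : L, br (br a b) c = br a (br b c) - br b (br a c))
    (a : L) (A : Submodule F L)
    (haA : a ∈ A)
    (hAclosed : ∀ x ∈ A, ∀ y ∈ A, br x y ∈ A)
    (hAmin : ∀ S : Submodule F L, a ∈ S → (∀ x ∈ S, ∀ y ∈ S, br x y ∈ S) → A ≤ S) :
    ∀ x ∈ A, ∀ y ∈ A, ∀ z : L, br (br x y) z = 0 := by
  -- elements of the kernel (left center) absorb brackets
  have hker_br : ∀ u v : L, br u = 0 → br (br u v) = 0 := by
    intro u v hu; ext z; simp [hleib, hu]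
  have hker_br' : ∀ u v : L, br u = 0 → br (br v u) = 0 := by
    intro u v hu; ext z; simp [hleib, hu]
  have haa : br (br a a) = 0 := by ext z; simp [hleib]
  set K : Submodule F L := LinearMap.ker br with hK
  set S : Submodule F L := Submodule.span F {a} ⊔ (K ⊓ A) with hS
  have hSA : S ≤ A := by
    apply sup_le
    · exact (Submodule.span_singleton_le_iff_mem a A).mpr haA
    · exact inf_le_right
  -- any bracket of two elements of S lies in the kernel
  have hbr : ∀ x ∈ S, ∀ y ∈ S, br (br x y) = 0 := by
    intro x hx y hy
    obtain ⟨p, hp, k, hk, rfl⟩ := Submodule.mem_sup.mp hx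
    obtain ⟨q, hq, l, hl, rfl⟩ := Submodule.mem_sup.mp hy
    obtain ⟨c, rfl⟩ := Submodule.mem_span_singleton.mp hp
    obtain ⟨d, rfl⟩ := Submodule.mem_span_singleton.mp hq
    have hk0 : br k = 0 := LinearMap.mem_ker.mp hk.1
    have hl0 : br l = 0 := LinearMap.mem_ker.mp hl.1
    have hka : br (br k a) = 0 := hker_br k a hk0
    have hkl : br (br k l) = 0 := hker_br k l hk0
    have hal : br (br a l) = 0 := hker_br' l a hl0
    simp [map_add, map_smul, haa, hka, hkl, hal]
  have hSclosed : ∀ x ∈ S, ∀ y ∈ S, br x y ∈ S := by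
    intro x hx y hy
    apply Submodule.mem_sup_right
    exact Submodule.mem_inf.mpr
      ⟨LinearMap.mem_ker.mpr (hbr x hx y hy), hAclosed x (hSA hx) y (hSA hy)⟩
  have hAS : A ≤ S :=
    hAmin S (Submodule.mem_sup_left (Submodule.mem_span_singleton_self a)) hSclosed
  intro x hx y hy z
  exact LinearMap.congr_fun (hbr x (hAS hx) y (hAS hy)) z
end

section
/- Let L be a left Leibniz algebra over a field F that contains no proper nonzero subalgebras. Then L is one-dimensional; in particular L is a Lie algebra with trivial bracket. -/
/-- A (nonzero) left Leibniz algebra with no proper nonzero subalgebras is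
one-dimensional, and in particular it is a Lie algebra with trivial bracket. -/
theorem dim_one_of_no_proper_subalgebras
    {F : Type*} [Field F] {L : Type*} [AddCommGroup L] [Module F L] [Nontrivial L]
    (br : L →ₗ[F] L →ₗ[F] L)
    (hleib : ∀ a b c : L, br (br a b) c = br a (br b c) - br b (br a c))
    (hmin : ∀ S : Submodule F L, (∀ x ∈ S, ∀ y ∈ S, br x y ∈ S) → S = ⊥ ∨ S = ⊤) :
    Module.finrank F L = 1 ∧ ∀ x y : L, br x y = 0 := by
  -- squares are left annihilators
  have hsqann : ∀ a c : L, br (br a a) c = 0 := by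
    intro a c
    rw [hleib a a c, sub_self]
  -- the kernel of br is a subalgebra
  have hker := hmin (LinearMap.ker br) (by
    intro x hx y hy
    simp only [LinearMap.mem_ker] at hx ⊢
    rw [hx]; simp)
  -- in either case, all squares vanish
  have hsq : ∀ a : L, br a a = 0 := by
    rcases hker with h | h
    · intro a
      have : br a a ∈ LinearMap.ker br := by
        rw [LinearMap.mem_ker]
        ext c
        exact hsqann a c
      rw [h, Submodule.mem_bot] at this
      exact this
    · intro a
      have : a ∈ LinearMap.ker br := by rw [h]; trivial
      rw [LinearMap.mem_ker] at this
      rw [this]; simp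
  obtain ⟨x, hx⟩ := exists_ne (0 : L)
  -- the span of x is a subalgebra
  have hspan : ∀ u ∈ Submodule.span F {x}, ∀ v ∈ Submodule.span F {x},
      br u v = 0 := by
    intro u hu v hv
    rw [Submodule.mem_span_singleton] at hu hv
    obtain ⟨a, rfl⟩ := hu
    obtain ⟨b, rfl⟩ := hv
    simp [hsq x]
  have htop : Submodule.span F {x} = ⊤ := by
    rcases hmin (Submodule.span F {x}) (fun u hu v hv => by
      rw [hspan u hu v hv]; simp) with h | h
    · exfalso
      have : x ∈ Submodule.span F {x} := Submodule.mem_span_singleton_self x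
      rw [h, Submodule.mem_bot] at this
      exact hx this
    · exact h
  constructor
  · exact finrank_eq_one x hx (fun w => by
      have : w ∈ Submodule.span F {x} := htop ▸ Submodule.mem_top
      rw [Submodule.mem_span_singleton] at this
      obtain ⟨c, hc⟩ := this
      exact ⟨c, hc⟩)
  · intro u v
    exact hspan u (htop ▸ Submodule.mem_top) v (htop ▸ Submodule.mem_top)
end

section
/- Let L be a finite-dimensional left Leibniz algebra over a field F containing an ideal K of codimension 1. If K is non-abelian and dim_F(K/Leib(K)) = 1, then Leib(L) = Leib(K). -/
/-- Let `L` be a finite-dimensional left Leibniz algebra with an ideal `K` of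
codimension 1. If `K` is non-abelian and `dim_F(K / Leib(K)) = 1`, then
`Leib(L) = Leib(K)`. -/
theorem leibniz_kernel_eq_of_codim_one_ideal
    {F : Type*} [Field F] {L : Type*} [AddCommGroup L] [Module F L]
    [FiniteDimensional F L]
    (br : L →ₗ[F] L →ₗ[F] L)
    (hleib : ∀ a b c : L, br (br a b) c = br a (br b c) - br b (br a c))
    (K : Submodule F L)
    (hideal : ∀ a : L, ∀ x ∈ K, br a x ∈ K ∧ br x a ∈ K)
    (hcodim : Module.finrank F (L ⧸ K) = 1)
    (hnonab : ∃ x ∈ K, ∃ y ∈ K, br x y ≠ 0)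
    (hK1 : Module.finrank F
      (↥K ⧸ (Submodule.comap K.subtype
        (Submodule.span F {z : L | ∃ a ∈ K, z = br a a}))) = 1) :
    Submodule.span F {z : L | ∃ a : L, z = br a a} =
      Submodule.span F {z : L | ∃ a ∈ K, z = br a a} := by
  set S : Submodule F L := Submodule.span F {z : L | ∃ a ∈ K, z = br a a} with hSdef
  -- squares annihilate on the left
  have hsq : ∀ a z : L, br (br a a) z = 0 := by
    intro a z; rw [hleib a a z, sub_self]
  have hgen : ∀ a ∈ K, br a a ∈ S := fun a ha => Submodule.subset_span ⟨a, ha, rfl⟩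
  -- elements of S annihilate on the left
  have hS_ann : ∀ s ∈ S, ∀ z : L, br s z = 0 := by
    intro s hs z
    have h : S ≤ LinearMap.ker (br.flip z) := by
      rw [hSdef, Submodule.span_le]
      rintro _ ⟨a, ha, rfl⟩
      simp [LinearMap.mem_ker, LinearMap.flip_apply, hsq]
    simpa [LinearMap.mem_ker, LinearMap.flip_apply] using h hs
  -- polarization within K
  have hpol : ∀ c ∈ K, ∀ d ∈ K, br c d + br d c ∈ S := by
    intro c hc d hd
    have h : br c d + br d c = br (c + d) (c + d) - br c c - br d d := by
      simp only [map_add, LinearMap.add_apply]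
      abel
    rw [h]
    exact sub_mem (sub_mem (hgen _ (add_mem hc hd)) (hgen _ hc)) (hgen _ hd)
  -- left multiplication preserves S
  have hKS : ∀ (b : L), ∀ s ∈ S, br b s ∈ S := by
    intro b s hs
    have h : S ≤ S.comap (br b) := by
      conv_lhs => rw [hSdef]
      rw [Submodule.span_le]
      rintro _ ⟨a, ha, rfl⟩
      simp only [SetLike.mem_coe, Submodule.mem_comap]
      have hba : br b a ∈ K := (hideal b a ha).1
      have h2 : br b (br a a) = br (br b a) a + br a (br b a) := by
        rw [hleib b a a]; abel
      rw [h2]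
      exact hpol _ hba _ ha
    exact h hs
  -- pick u spanning K mod S
  obtain ⟨v0, hv0ne, hv0span⟩ := finrank_eq_one_iff'.mp hK1
  obtain ⟨u', hu'⟩ := Submodule.Quotient.mk_surjective _ v0
  set u : L := (u' : L) with hudef
  have hu : u ∈ K := u'.2
  have hudecomp : ∀ k ∈ K, ∃ γ : F, k - γ • u ∈ S := by
    intro k hk
    obtain ⟨γ, hγ⟩ := hv0span (Submodule.Quotient.mk (⟨k, hk⟩ : K))
    refine ⟨γ, ?_⟩
    rw [← hu'] at hγ
    have h1 : (⟨k, hk⟩ : K) - γ • u' ∈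
        Submodule.comap K.subtype S := by
      rw [← Submodule.Quotient.eq]
      rw [← hγ, Submodule.Quotient.mk_smul]
    simpa using h1
  -- non-abelianness gives v with [u,v] ≠ 0
  obtain ⟨s, hsK, t, htK, hst⟩ := hnonab
  obtain ⟨σ, hσ⟩ := hudecomp s hsK
  have hv : br u t ≠ 0 := by
    intro h0
    apply hst
    have key : br s t = σ • br u t + br (s - σ • u) t := by
      simp only [map_sub, map_smul, LinearMap.sub_apply, LinearMap.smul_apply]
      abel
    rw [key, hS_ann _ hσ t, h0, smul_zero, add_zero]
  -- pick x spanning L mod K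
  obtain ⟨w0, hw0ne, hw0span⟩ := finrank_eq_one_iff'.mp hcodim
  obtain ⟨x, hx'⟩ := Submodule.Quotient.mk_surjective _ w0
  have hxK : x ∉ K := by
    intro hxin
    apply hw0ne
    rw [← hx', Submodule.Quotient.mk_eq_zero]
    exact hxin
  have hxdecomp : ∀ a : L, ∃ lam : F, a - lam • x ∈ K := by
    intro a
    obtain ⟨lam, hlam⟩ := hw0span (Submodule.Quotient.mk a)
    refine ⟨lam, ?_⟩
    rw [← hx'] at hlam
    rw [← Submodule.Quotient.eq, ← hlam, Submodule.Quotient.mk_smul]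
  -- step A : br x x ∈ K
  obtain ⟨ρ, hρ⟩ := hxdecomp (br x x)
  have hρ0 : ρ = 0 := by
    by_contra hne
    apply hxK
    have hcK : br x x - ρ • x ∈ K := hρ
    have hbx : br (br x x - ρ • x) x ∈ K := (hideal x _ hcK).2
    have h2 : br (br x x - ρ • x) x = -(ρ • br x x) := by
      simp [map_sub, map_smul, LinearMap.sub_apply, LinearMap.smul_apply, hsq x x]
    have h3 : ρ • ρ • x = -(br (br x x - ρ • x) x) - ρ • (br x x - ρ • x) := by
      rw [h2]; module
    have hmem : ρ • ρ • x ∈ K :=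
      h3 ▸ sub_mem (neg_mem hbx) (K.smul_mem ρ hcK)
    have hx2 : x = (ρ * ρ)⁻¹ • (ρ • ρ • x) := by
      rw [smul_smul, smul_smul, mul_assoc, inv_mul_cancel₀ (mul_ne_zero hne hne), one_smul]
    rw [hx2]
    exact K.smul_mem _ hmem
  have hxxK : br x x ∈ K := by
    rw [hρ0, zero_smul, sub_zero] at hρ; exact hρ
  -- step B : br x x ∈ S
  obtain ⟨γ, hγ⟩ := hudecomp (br x x) hxxK
  have hγ0 : γ = 0 := by
    by_contra hne
    apply hv
    have h1 := hS_ann _ hγ t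
    simp only [map_sub, map_smul, LinearMap.sub_apply, LinearMap.smul_apply,
      hsq x t, zero_sub, neg_eq_zero] at h1
    exact (smul_eq_zero.mp h1).resolve_left hne
  have hxxS : br x x ∈ S := by
    rw [hγ0, zero_smul, sub_zero] at hγ; exact hγ
  -- step C : mixed terms
  have hmix : ∀ k ∈ K, br k x + br x k ∈ S := by
    intro k hk
    have hpK : br k x + br x k ∈ K := add_mem (hideal x k hk).2 (hideal x k hk).1
    have hp_ann : ∀ z : L, br (br k x + br x k) z = 0 := by
      intro z
      have h0 : br (br (k + x) (k + x)) z = 0 := hsq (k + x) z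
      simp only [map_add, LinearMap.add_apply, hsq k z, hsq x z, zero_add,
        add_zero] at h0
      simp only [map_add, LinearMap.add_apply]
      rw [add_comm]; exact h0
    obtain ⟨μ, hμ⟩ := hudecomp _ hpK
    have hμ0 : μ = 0 := by
      by_contra hne
      apply hv
      have h1 := hS_ann _ hμ t
      simp only [map_sub, map_smul, LinearMap.sub_apply, LinearMap.smul_apply,
        hp_ann t, zero_sub, neg_eq_zero] at h1
      exact (smul_eq_zero.mp h1).resolve_left hne
    rw [hμ0, zero_smul, sub_zero] at hμ
    exact hμ
  -- final
  apply le_antisymm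
  · rw [Submodule.span_le]
    rintro _ ⟨a, rfl⟩
    obtain ⟨lam, hlam⟩ := hxdecomp a
    set k : L := a - lam • x with hkdef
    have ha : a = k + lam • x := by rw [hkdef]; abel
    have expand : br a a = br k k + (lam • (br k x + br x k) +
        (lam * lam) • br x x) := by
      rw [ha]
      simp only [map_add, map_smul, LinearMap.add_apply, LinearMap.smul_apply,
        smul_add, smul_smul]
      module
    rw [SetLike.mem_coe, expand]
    exact add_mem (hgen k hlam)
      (add_mem (S.smul_mem _ (hmix k hlam)) (S.smul_mem _ hxxS))
  · exact Submodule.span_mono (by rintro _ ⟨a, ha, rfl⟩; exact ⟨a, rfl⟩)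
end

section
/- Let K be the cyclic nilpotent Leibniz algebra of dimension n over a field F with basis a_1, ..., a_n where [a_1, a_1] = a_2, [a_1, a_{j-1}] = a_j for 3 ≤ j ≤ n, [a_1, a_n] = 0, and [a_m, a_k] = 0 for all m > 1. If f is a derivation of K and f(a_1) = γ_1 a_1 + γ_2 a_2 + ... + γ_n a_n, then for each k with 2 ≤ k ≤ n, f(a_k) = k·γ_1 a_k + γ_2 a_{k+1} + γ_3 a_{k+2} + ... + γ_{n-k+1} a_n. -/
/-- Let `K` be the cyclic nilpotent Leibniz algebra with basis `a ⟨0, by omega⟩, …, a (n-1)`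
(representing `a_1, …, a_n`), where `[a_1, a_{j-1}] = a_j` and all other products of
basis vectors vanish. If `f` is a derivation with
`f(a_1) = γ_1 a_1 + ⋯ + γ_n a_n`, then for every `k ≥ 2` (0-indexed `k ≥ 1`),
`f(a_k) = k γ_1 a_k + γ_2 a_{k+1} + ⋯ + γ_{n-k+1} a_n`. -/
theorem derivation_of_cyclic_nilpotent
    {F : Type*} [Field F] {L : Type*} [AddCommGroup L] [Module F L]
    {n : ℕ} (hn : 2 ≤ n)
    (a : Module.Basis (Fin n) F L)
    (br : L →ₗ[F] L →ₗ[F] L)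
    (hleib : ∀ x y z : L, br (br x y) z = br x (br y z) - br y (br x z))
    (hsucc : ∀ j : Fin n, ∀ h : j.val + 1 < n, br (a ⟨0, by omega⟩) (a j) = a ⟨j.val + 1, h⟩)
    (hlast : ∀ j : Fin n, j.val + 1 = n → br (a ⟨0, by omega⟩) (a j) = 0)
    (habel : ∀ i j : Fin n, i.val ≠ 0 → br (a i) (a j) = 0)
    (f : L →ₗ[F] L)
    (hf : ∀ x y : L, f (br x y) = br (f x) y + br x (f y))
    (γ : Fin n → F)
    (hfa1 : f (a ⟨0, by omega⟩) = ∑ i : Fin n, γ i • a i) :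
    ∀ k : Fin n, 1 ≤ k.val →
      f (a k) = (((k.val + 1 : ℕ) : F) * γ ⟨0, by omega⟩) • a k +
        ∑ j : Fin n, (if k.val < j.val then
          γ ⟨j.val - k.val, lt_of_le_of_lt (Nat.sub_le _ _) j.isLt⟩ else 0) • a j := by
  have hn0 : 0 < n := by omega
  set a0 : L := a ⟨0, hn0⟩ with ha0
  set γ' : ℕ → F := fun i => if h : i < n then γ ⟨i, h⟩ else 0 with hγ'
  set c : ℕ → Fin n → F := fun m j =>
    (if j.val = m then ((m + 1 : ℕ) : F) * γ' 0 else 0) +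
    (if m < j.val then γ' (j.val - m) else 0) with hc
  -- bracket with f a0 on the left against a basis vector
  have brL : ∀ j : Fin n, br (f a0) (a j) = γ' 0 • br a0 (a j) := by
    intro j
    rw [hfa1]
    rw [map_sum, LinearMap.sum_apply]
    have : ∀ i : Fin n, br (γ i • a i) (a j) =
        if i = (⟨0, hn0⟩ : Fin n) then γ' 0 • br a0 (a j) else 0 := by
      intro i
      rw [map_smul, LinearMap.smul_apply]
      split
      · next h =>
        subst h
        simp [hγ', hn0, ha0]
      · next h => rw [habel i j (fun h0 => h (Fin.ext h0)), smul_zero]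
    rw [Finset.sum_congr rfl (fun i _ => this i)]
    simp
  -- shift lemma: bracketing a0 against a combination shifts indices up by one
  have shift : ∀ g : Fin n → F, br a0 (∑ i : Fin n, g i • a i) =
      ∑ j : Fin n, (if h : 1 ≤ j.val then g ⟨j.val - 1, by omega⟩ else 0) • a j := by
    intro g
    set F' : ℕ → L := fun i =>
      if h : i + 1 < n then (if h2 : i < n then g ⟨i, h2⟩ else 0) • a ⟨i + 1, h⟩ else 0 with hF'
    set G' : ℕ → L := fun j =>
      if h : j < n then (if h2 : 1 ≤ j then g ⟨j - 1, by omega⟩ else 0) • a ⟨j, h⟩ else 0 with hG'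
    have hFG : ∀ i : ℕ, F' i = G' (i + 1) := by
      intro i
      simp only [hF', hG']
      by_cases h : i + 1 < n
      · rw [dif_pos h, dif_pos h, dif_pos (by omega : i < n), dif_pos (by omega : 1 ≤ i + 1)]
        rfl
      · rw [dif_neg h, dif_neg h]
    have L1 : br a0 (∑ i : Fin n, g i • a i) = ∑ i ∈ Finset.range n, F' i := by
      rw [map_sum]
      rw [show (∑ i : Fin n, br a0 (g i • a i)) = ∑ i : Fin n, F' i.val from
        Finset.sum_congr rfl fun i _ => by
          simp only [hF']
          rw [map_smul]
          by_cases h : i.val + 1 < n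
          · rw [dif_pos h, dif_pos i.isLt, hsucc i h]
          · rw [dif_neg h, hlast i (by omega), smul_zero]]
      exact Fin.sum_univ_eq_sum_range F' n
    have L2 : (∑ j : Fin n, (if h : 1 ≤ j.val then g ⟨j.val - 1, by omega⟩ else 0) • a j)
        = ∑ j ∈ Finset.range n, G' j := by
      rw [show (∑ j : Fin n, (if h : 1 ≤ j.val then g ⟨j.val - 1, by omega⟩ else 0) • a j)
          = ∑ j : Fin n, G' j.val from
        Finset.sum_congr rfl fun j _ => by
          simp only [hG']
          rw [dif_pos j.isLt]]
      exact Fin.sum_univ_eq_sum_range G' n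
    rw [L1, L2]
    have h1 : ∑ i ∈ Finset.range n, F' i = ∑ i ∈ Finset.range ((n-1)+1), F' i := by
      rw [Nat.sub_add_cancel (by omega)]
    have h2 : ∑ j ∈ Finset.range n, G' j = ∑ j ∈ Finset.range ((n-1)+1), G' j := by
      rw [Nat.sub_add_cancel (by omega)]
    rw [h1, h2, Finset.sum_range_succ, Finset.sum_range_succ']
    have hFlast : F' (n-1) = 0 := by
      simp only [hF']
      rw [dif_neg (by omega)]
    have hG0 : G' 0 = 0 := by
      simp only [hG']
      rw [dif_pos hn0, dif_neg (by omega), zero_smul]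
    simp only [hFlast, hG0, hFG, add_zero]
  -- main induction
  have P : ∀ m : ℕ, ∀ hm : m < n, f (a ⟨m, hm⟩) = ∑ j : Fin n, c m j • a j := by
    intro m
    induction m with
    | zero =>
      intro hm
      have h0 : f (a ⟨0, hm⟩) = ∑ i : Fin n, γ i • a i := hfa1
      rw [h0]
      refine Finset.sum_congr rfl fun j _ => ?_
      congr 1
      simp only [hc, hγ']
      by_cases h : j.val = 0
      · rw [if_pos h, if_neg (by omega), dif_pos hn0, add_zero, Nat.cast_one, one_mul]
        exact congrArg γ (Fin.ext h)
      · rw [if_neg h, if_pos (by omega), zero_add, dif_pos (by omega : j.val - 0 < n)]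
        exact congrArg γ (Fin.ext (by simp))
    | succ m ih =>
      intro hm
      have hm' : m < n := by omega
      have e1 : a ⟨m+1, hm⟩ = br a0 (a ⟨m, hm'⟩) := (hsucc ⟨m, hm'⟩ hm).symm
      rw [e1, hf, brL, ih hm', shift, hsucc ⟨m, hm'⟩ hm]
      have expand : γ' 0 • a ⟨m+1, hm⟩ =
          ∑ j : Fin n, (if j = (⟨m+1, hm⟩ : Fin n) then γ' 0 else 0) • a j := by
        simp [ite_smul]
      rw [expand, ← Finset.sum_add_distrib]
      refine Finset.sum_congr rfl fun j _ => ?_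
      rw [← add_smul]
      congr 1
      simp only [hc, hγ', Fin.ext_iff]
      by_cases h1 : j.val = m + 1
      · rw [if_pos h1, dif_pos (by omega : 1 ≤ j.val), if_pos (by omega : j.val - 1 = m),
          if_neg (by omega : ¬ m < j.val - 1), if_pos h1, if_neg (by omega : ¬ m + 1 < j.val),
          add_zero, add_zero]
        push_cast
        ring
      · rw [if_neg h1, if_neg h1, zero_add]
        by_cases h2 : 1 ≤ j.val
        · rw [dif_pos h2, if_neg (by omega : ¬ j.val - 1 = m), zero_add]
          by_cases h3 : m + 1 < j.val
          · rw [if_pos (by omega : m < j.val - 1), if_pos h3,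
              show j.val - 1 - m = j.val - (m + 1) from by omega, zero_add]
          · rw [if_neg (by omega : ¬ m < j.val - 1), if_neg h3, zero_add]
        · rw [dif_neg h2, if_neg (by omega : ¬ m + 1 < j.val), zero_add]
  -- conclude
  intro k hk
  have hfk : f (a k) = ∑ j : Fin n, c k.val j • a j := P k.val k.isLt
  rw [hfk]
  have key2 : ∀ j : Fin n, c k.val j =
      (if j = k then ((k.val + 1 : ℕ) : F) * γ ⟨0, hn0⟩ else 0) +
      (if k.val < j.val then γ ⟨j.val - k.val, lt_of_le_of_lt (Nat.sub_le _ _) j.isLt⟩ else 0) := by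
    intro j
    simp only [hc, hγ']
    congr 1
    · by_cases h : j = k
      · rw [if_pos (by rw [h]), if_pos h, dif_pos hn0]
      · rw [if_neg (fun hv => h (Fin.ext hv)), if_neg h]
    · by_cases h : k.val < j.val
      · rw [if_pos h, if_pos h, dif_pos (lt_of_le_of_lt (Nat.sub_le _ _) j.isLt)]
      · rw [if_neg h, if_neg h]
  rw [Finset.sum_congr rfl fun j _ => by rw [key2 j, add_smul], Finset.sum_add_distrib]
  congr 1
  simp [ite_smul]
end
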